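/- For any constants c₁, c₂ ∈ ℝ, the function f₁(r) = c₁(r+2)³/r² + c₂(r³ + 10r² + 40r)/(r+2)² solves the radial ODE f₁'' + (2/r)f₁' − (2/r²)f₁ + (3/r)(1+r/2)⁻² f₁ = 0 on r > 0. -/

import Mathlib

noncomputable section

def f₁ (c₁ c₂ : ℝ) (r : ℝ) : ℝ :=
  c₁ * (r + 2) ^ 3 / r ^ 2 + c₂ * (r ^ 3 + 10 * r ^ 2 + 40 * r) / (r + 2) ^ 2

def d1aux (c₁ c₂ : ℝ) (r : ℝ) : ℝ :=
  c₁ * (r ^ 3 - 12 * r - 16) / r ^ 3 + c₂ * (r ^ 3 + 6 * r ^ 2 + 80) / (r + 2) ^ 3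

lemma hasDerivAt_f₁ (c₁ c₂ r : ℝ) (hr : 0 < r) :
    HasDerivAt (f₁ c₁ c₂) (d1aux c₁ c₂ r) r := by
  have hr0 : r ≠ 0 := ne_of_gt hr
  have hr2 : r + 2 ≠ 0 := by positivity
  have h1 : HasDerivAt (fun r : ℝ => c₁ * (r + 2) ^ 3)
      (c₁ * (3 * (r + 2) ^ 2)) r := by
    simpa using (((hasDerivAt_id r).add_const 2).pow 3).const_mul c₁
  have h2 : HasDerivAt (fun r : ℝ => r ^ 2) (2 * r) r := by
    simpa using hasDerivAt_pow 2 r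
  have h3 : HasDerivAt (fun r : ℝ => c₂ * (r ^ 3 + 10 * r ^ 2 + 40 * r))
      (c₂ * (3 * r ^ 2 + 10 * (2 * r) + 40)) r := by
    simpa using ((((hasDerivAt_id r).pow 3).add
      (((hasDerivAt_id r).pow 2).const_mul 10)).add
        ((hasDerivAt_id r).const_mul 40)).const_mul c₂
  have h4 : HasDerivAt (fun r : ℝ => (r + 2) ^ 2) (2 * (r + 2)) r := by
    simpa [Function.comp_def] using (hasDerivAt_pow 2 (r + 2)).comp r ((hasDerivAt_id r).add_const 2)
  have := (h1.div h2 (pow_ne_zero 2 hr0)).add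
    (h3.div h4 (pow_ne_zero 2 hr2))
  refine this.congr_deriv ?_
  unfold d1aux
  field_simp
  ring

def d2aux (c₁ c₂ : ℝ) (r : ℝ) : ℝ :=
  c₁ * (24 * (r + 2)) / r ^ 4 + c₂ * (24 * (r - 10)) / (r + 2) ^ 4

lemma hasDerivAt_d1aux (c₁ c₂ r : ℝ) (hr : 0 < r) :
    HasDerivAt (d1aux c₁ c₂) (d2aux c₁ c₂ r) r := by
  have hr0 : r ≠ 0 := ne_of_gt hr
  have hr2 : r + 2 ≠ 0 := by positivity
  have h1 : HasDerivAt (fun r : ℝ => c₁ * (r ^ 3 - 12 * r - 16))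
      (c₁ * (3 * r ^ 2 - 12)) r := by
    simpa using ((((hasDerivAt_id r).pow 3).sub
      ((hasDerivAt_id r).const_mul 12)).sub (hasDerivAt_const r 16)).const_mul c₁
  have h2 : HasDerivAt (fun r : ℝ => r ^ 3) (3 * r ^ 2) r := by
    simpa using hasDerivAt_pow 3 r
  have h3 : HasDerivAt (fun r : ℝ => c₂ * (r ^ 3 + 6 * r ^ 2 + 80))
      (c₂ * (3 * r ^ 2 + 6 * (2 * r))) r := by
    simpa using ((((hasDerivAt_id r).pow 3).add
      (((hasDerivAt_id r).pow 2).const_mul 6)).add (hasDerivAt_const r 80)).const_mul c₂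
  have h4 : HasDerivAt (fun r : ℝ => (r + 2) ^ 3) (3 * (r + 2) ^ 2) r := by
    simpa [Function.comp_def] using (hasDerivAt_pow 3 (r + 2)).comp r ((hasDerivAt_id r).add_const 2)
  have := (h1.div h2 (pow_ne_zero 3 hr0)).add
    (h3.div h4 (pow_ne_zero 3 hr2))
  refine this.congr_deriv ?_
  unfold d2aux
  field_simp
  ring

theorem stmt_10 (c₁ c₂ : ℝ) :
    ∀ r : ℝ, 0 < r →
      deriv (deriv (f₁ c₁ c₂)) r + (2 / r) * deriv (f₁ c₁ c₂) r
        - (2 / r ^ 2) * f₁ c₁ c₂ r + (3 / r) * ((1 + r / 2)⁻¹) ^ 2 * f₁ c₁ c₂ r = 0 := by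
  intro r hr
  have hr0 : r ≠ 0 := ne_of_gt hr
  have hr2 : r + 2 ≠ 0 := by positivity
  have hd1 : deriv (f₁ c₁ c₂) =ᶠ[nhds r] d1aux c₁ c₂ := by
    filter_upwards [eventually_gt_nhds hr] with x hx
    exact (hasDerivAt_f₁ c₁ c₂ x hx).deriv
  have hderiv1 : deriv (f₁ c₁ c₂) r = d1aux c₁ c₂ r := (hasDerivAt_f₁ c₁ c₂ r hr).deriv
  have hderiv2 : deriv (deriv (f₁ c₁ c₂)) r = d2aux c₁ c₂ r := by
    rw [hd1.deriv_eq]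
    exact (hasDerivAt_d1aux c₁ c₂ r hr).deriv
  rw [hderiv1, hderiv2]
  unfold f₁ d1aux d2aux
  have h12 : 1 + r / 2 ≠ 0 := by positivity
  field_simp
  ring
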